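/- Let B, C be n×n real matrices such that for every x ∈ ℝ^n the orbit {e^{sC} x : s ∈ ℝ} is contained in the orbit {e^{tB} x : t ∈ ℝ}, and suppose there is no c ∈ ℝ with C = cB. Then there exists x ∈ ℝ^n such that the vectors Bx and Cx are linearly independent. -/

import Mathlib

open NormedSpace

lemma exp_apply_eq_self_of_apply_eq_zero
    {E : Type*} [NormedAddCommGroup E] [NormedSpace ℝ E] [CompleteSpace E]
    (B : E →L[ℝ] E) (x : E) (hx : B x = 0) (t : ℝ) :
    NormedSpace.exp (t • B) x = x := by
  have hsum := NormedSpace.expSeries_summable' (𝕂 := ℝ) (t • B)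
  rw [NormedSpace.exp_eq_tsum (𝕂 := ℝ)]
  have h1 := (ContinuousLinearMap.apply ℝ E x).map_tsum hsum
  simp only [ContinuousLinearMap.apply_apply] at h1
  rw [h1, tsum_eq_single 0 ?_]
  · simp
  · intro k hk
    obtain ⟨m, rfl⟩ := Nat.exists_eq_succ_of_ne_zero hk
    have hz : ((t • B) ^ (m + 1)) x = 0 := by
      rw [pow_succ]
      simp [ContinuousLinearMap.mul_apply, hx]
      exact Or.inr (Function.iterate_fixed (by simp) m)
    simp [hz]

theorem transversal_point_of_not_proportional
    (n : ℕ)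
    (B C : EuclideanSpace ℝ (Fin n) →L[ℝ] EuclideanSpace ℝ (Fin n))
    (horb : ∀ x : EuclideanSpace ℝ (Fin n), ∀ s : ℝ, ∃ t : ℝ,
        NormedSpace.exp (s • C) x = NormedSpace.exp (t • B) x)
    (hprop : ¬ ∃ c : ℝ, C = c • B) :
    ∃ x : EuclideanSpace ℝ (Fin n), LinearIndependent ℝ ![B x, C x] := by
  by_contra hx
  push_neg at hx
  apply hprop
  set E := EuclideanSpace ℝ (Fin n)
  -- kernel inclusion
  have hker : ∀ x : E, B x = 0 → C x = 0 := by
    intro x hBx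
    have hconst : ∀ s : ℝ, NormedSpace.exp (s • C) x = x := by
      intro s
      obtain ⟨t, ht⟩ := horb x s
      rw [ht, exp_apply_eq_self_of_apply_eq_zero B x hBx t]
    have hd : HasDerivAt (fun s : ℝ => NormedSpace.exp (s • C) x) (C x) 0 := by
      have h1 : HasDerivAt (fun s : ℝ => NormedSpace.exp (s • C))
          (NormedSpace.exp ((0 : ℝ) • C) * C) 0 := hasDerivAt_exp_smul_const C 0
      have h2 := h1.clm_apply (hasDerivAt_const (0 : ℝ) x)
      have h3 : NormedSpace.exp ((0 : ℝ) • C) = 1 := by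
        rw [show (0 : ℝ) • C = 0 from zero_smul ℝ C, NormedSpace.exp_zero]
      simpa [h3] using h2
    have hd0 : HasDerivAt (fun s : ℝ => NormedSpace.exp (s • C) x) 0 0 := by
      have : (fun s : ℝ => NormedSpace.exp (s • C) x) = fun _ => x :=
        funext hconst
      rw [this]
      exact hasDerivAt_const 0 x
    exact hd.unique hd0
  -- pointwise proportionality
  have hdep : ∀ x : E, ∃ c : ℝ, C x = c • B x := by
    intro x
    have h := hx x
    rw [LinearIndependent.pair_iff] at h
    push_neg at h
    obtain ⟨s, t, hst, hne⟩ := h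
    by_cases ht : t = 0
    · subst ht
      have hs : s ≠ 0 := by tauto
      have hBx : B x = 0 := by
        have : s • B x = 0 := by simpa using hst
        exact (smul_eq_zero.mp this).resolve_left hs
      exact ⟨0, by simp [hker x hBx]⟩
    · refine ⟨-s / t, ?_⟩
      have : t • C x = -(s • B x) := by linear_combination (norm := module) hst
      have h2 : C x = t⁻¹ • -(s • B x) := by
        rw [← this, smul_smul, inv_mul_cancel₀ ht, one_smul]
      rw [h2]
      rw [div_eq_mul_inv]
      module
  -- global constant
  by_cases hB : B = 0
  · refine ⟨0, ?_⟩
    ext x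
    have : B x = 0 := by rw [hB]; rfl
    simp [hker x this]
  · have : ∃ x0 : E, B x0 ≠ 0 := by
      by_contra h
      push_neg at h
      exact hB (ContinuousLinearMap.ext fun x => by simp [h x])
    obtain ⟨x0, hx0⟩ := this
    obtain ⟨c, hc⟩ := hdep x0
    refine ⟨c, ContinuousLinearMap.ext fun y => ?_⟩
    show C y = c • B y
    obtain ⟨d, hd⟩ := hdep y
    by_cases hBy : B y = 0
    · simp [hker y hBy, hBy]
    · by_cases hind : LinearIndependent ℝ ![B x0, B y]
      · obtain ⟨e, he⟩ := hdep (x0 + y)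
        rw [map_add, map_add, hc, hd, smul_add] at he
        have key : (c - e) • B x0 + (d - e) • B y = 0 := by
          linear_combination (norm := module) he
        obtain ⟨h1, h2⟩ := LinearIndependent.pair_iff.mp hind _ _ key
        have hce : c = e := by linarith [sub_eq_zero.mp (by linarith : c - e = 0)]
        have hde : d = e := by linarith [sub_eq_zero.mp (by linarith : d - e = 0)]
        rw [hd, hde, ← hce]
      · rw [LinearIndependent.pair_iff] at hind
        push_neg at hind
        obtain ⟨s, t, hst, hne⟩ := hind
        have ht : t ≠ 0 := by
          intro h
          subst h
          have hs : s ≠ 0 := by tauto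
          have : B x0 = 0 := by
            have : s • B x0 = 0 := by simpa using hst
            exact (smul_eq_zero.mp this).resolve_left hs
          exact hx0 this
        set k : ℝ := -s / t with hk
        have hBy' : B y = k • B x0 := by
          have h1 : t • B y = -(s • B x0) := by
            linear_combination (norm := module) hst
          have : B y = t⁻¹ • -(s • B x0) := by
            rw [← h1, smul_smul, inv_mul_cancel₀ ht, one_smul]
          rw [this, hk, div_eq_mul_inv]
          module
        have hBz : B (y - k • x0) = 0 := by
          rw [map_sub, map_smul, hBy', sub_self]
        have hCz : C (y - k • x0) = 0 := hker _ hBz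
        rw [map_sub, map_smul, sub_eq_zero] at hCz
        rw [hCz, hc, hBy']
        module
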